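/- Let p be a prime and let k, i, j be integers with 1 ≤ i ≤ k ≤ p−1 and 1 ≤ j ≤ p−k. Then the number of semistandard Young tableaux of rectangular shape with j rows and i columns (i.e., of shape the partition (i^j)) with entries in {1,…,p−k} is not divisible by p. -/

import Mathlib

noncomputable section

/-- Cells of the Young diagram of `lam` (at most `m` rows). -/
def youngCells (m : ℕ) (lam : ℕ → ℕ) : Finset (ℕ × ℕ) :=
  (Finset.range m).biUnion fun r => (Finset.range (lam r)).image fun c => (r, c)

/-- A filling of the diagram with entries in `{1,…,m}` is a semistandard Young tableau if
rows are weakly increasing and columns are strictly increasing. -/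
def IsSSYT {m : ℕ} {lam : ℕ → ℕ} (T : {p // p ∈ youngCells m lam} → Fin m) : Prop :=
  (∀ p q : {p // p ∈ youngCells m lam},
      (p : ℕ × ℕ).1 = (q : ℕ × ℕ).1 → (q : ℕ × ℕ).2 = (p : ℕ × ℕ).2 + 1 → T p ≤ T q) ∧
  (∀ p q : {p // p ∈ youngCells m lam},
      (p : ℕ × ℕ).2 = (q : ℕ × ℕ).2 → (q : ℕ × ℕ).1 = (p : ℕ × ℕ).1 + 1 → T p < T q)

open Classical in
/-- The finite set of semistandard Young tableaux of shape `lam` with entries in `{1,…,m}`. -/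
def ssytFinset (m : ℕ) (lam : ℕ → ℕ) : Finset ({p // p ∈ youngCells m lam} → Fin m) :=
  Finset.univ.filter IsSSYT

/-- The rectangular partition `(partSize^numParts)`: `numParts` parts equal to `partSize`. -/
def rectPart (numParts partSize : ℕ) : ℕ → ℕ := fun r => if r < numParts then partSize else 0

-- ===== auxiliary =====
namespace SSYTAux
open Polynomial Finset

-- telescope
lemma desc_telescope (r : ℕ) (u v : ℕ) (huv : u ≤ v) :
    ((r : ℚ) + 1) * ∑ x ∈ Finset.Ico u v, (descPochhammer ℚ r).eval (x : ℚ)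
      = (descPochhammer ℚ (r+1)).eval (v : ℚ) - (descPochhammer ℚ (r+1)).eval (u : ℚ) := by
  induction v, huv using Nat.le_induction with
  | base => simp
  | succ v hv ih =>
    rw [Finset.sum_Ico_succ_top hv, mul_add, ih]
    have h1 : ((v+1 : ℕ) : ℚ) = (v : ℚ) + 1 := by push_cast; ring
    rw [h1]
    have h2 : (descPochhammer ℚ (r+1)).eval ((v:ℚ) + 1)
        = ((v:ℚ)+1) * (descPochhammer ℚ r).eval (v : ℚ) := by
      rw [descPochhammer_succ_left]
      simp [eval_comp]
    have h3 : (descPochhammer ℚ (r+1)).eval (v:ℚ)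
        = (descPochhammer ℚ r).eval (v : ℚ) * ((v:ℚ) - r) := by
      rw [descPochhammer_succ_right]
      simp
    rw [h2, h3]
    ring

open Matrix

noncomputable def descM (n : ℕ) (v : Fin n → ℚ) : Matrix (Fin n) (Fin n) ℚ :=
  Matrix.of fun s r => (descPochhammer ℚ (r : ℕ)).eval (v s)

lemma det_descM (n : ℕ) (v : Fin n → ℚ) : (descM n v).det = (Matrix.vandermonde v).det :=
  (Matrix.det_eval_matrixOfPolynomials_eq_det_vandermonde v
    (fun r : Fin n => descPochhammer ℚ (r : ℕ))
    (fun i => descPochhammer_natDegree (R := ℚ) (i:ℕ)) (fun i => monic_descPochhammer ℚ (i : ℕ))).symm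

lemma sum_vand (m : ℕ) (a : Fin (m+1) → ℕ) (ha : ∀ s : Fin m, a s.castSucc ≤ a s.succ) :
    (m.factorial : ℚ) *
      ∑ d ∈ Fintype.piFinset (fun s : Fin m => Finset.Ico (a s.castSucc) (a s.succ)),
        (Matrix.vandermonde fun s : Fin m => ((d s : ℚ))).det
      = (Matrix.vandermonde fun s : Fin (m+1) => ((a s : ℚ))).det := by
  classical
  -- replace each vandermonde det by descM det
  have h1 : ∀ d : Fin m → ℕ,
      (Matrix.vandermonde fun s : Fin m => ((d s : ℚ))).det
        = (Matrix.detRowAlternating : ((Fin m → ℚ) [⋀^Fin m]→ₗ[ℚ] ℚ)).toMultilinearMap (fun s : Fin m => fun r : Fin m =>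
            (descPochhammer ℚ (r : ℕ)).eval ((d s : ℚ))) := by
    intro d
    rw [← det_descM]
    rfl
  simp only [h1]
  rw [← MultilinearMap.map_sum_finset
    ((Matrix.detRowAlternating : ((Fin m → ℚ) [⋀^Fin m]→ₗ[ℚ] ℚ)).toMultilinearMap)
    (g := fun (s : Fin m) (x : ℕ) => (fun r : Fin m =>
      (descPochhammer ℚ (r : ℕ)).eval ((x : ℚ))))
    (A := fun s : Fin m => Finset.Ico (a s.castSucc) (a s.succ))]
  have h2 : (fun (s : Fin m) => ∑ x ∈ Finset.Ico (a s.castSucc) (a s.succ),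
        (fun r : Fin m => (descPochhammer ℚ (r : ℕ)).eval ((x : ℚ))))
      = fun (s : Fin m) (r : Fin m) => (1/((r:ℚ)+1)) *
          ((descPochhammer ℚ ((r : ℕ)+1)).eval ((a s.succ : ℚ))
            - (descPochhammer ℚ ((r : ℕ)+1)).eval ((a s.castSucc : ℚ))) := by
    funext s
    rw [Finset.sum_fn]
    funext r
    have := desc_telescope (r : ℕ) (a s.castSucc) (a s.succ) (ha s)
    have hpush : ∑ x ∈ Finset.Ico (a s.castSucc) (a s.succ),
        (descPochhammer ℚ (r:ℕ)).eval ((x : ℚ))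
        = ((descPochhammer ℚ ((r:ℕ)+1)).eval ((a s.succ : ℚ))
            - (descPochhammer ℚ ((r:ℕ)+1)).eval ((a s.castSucc : ℚ))) / ((r:ℚ)+1) := by
      rw [eq_div_iff (by positivity), mul_comm, this]
    rw [hpush]; ring
  rw [h2]
  have h3 : (Matrix.detRowAlternating : ((Fin m → ℚ) [⋀^Fin m]→ₗ[ℚ] ℚ)).toMultilinearMap
      (fun (s : Fin m) (r : Fin m) => (1/((r:ℚ)+1)) *
          ((descPochhammer ℚ ((r : ℕ)+1)).eval ((a s.succ : ℚ))
            - (descPochhammer ℚ ((r : ℕ)+1)).eval ((a s.castSucc : ℚ))))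
      = Matrix.det (Matrix.of fun (s : Fin m) (r : Fin m) => (1/((r:ℚ)+1)) *
          ((descPochhammer ℚ ((r : ℕ)+1)).eval ((a s.succ : ℚ))
            - (descPochhammer ℚ ((r : ℕ)+1)).eval ((a s.castSucc : ℚ)))) := rfl
  have hdmr := Matrix.det_mul_row (fun r : Fin m => (1/((r:ℚ)+1)))
    (Matrix.of fun (s : Fin m) (r : Fin m) =>
      ((descPochhammer ℚ ((r : ℕ)+1)).eval ((a s.succ : ℚ))
        - (descPochhammer ℚ ((r : ℕ)+1)).eval ((a s.castSucc : ℚ))))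
  simp only [Matrix.of_apply] at hdmr
  rw [h3, hdmr]
  have h0 : (∏ r : Fin m, ((r:ℚ)+1)) = (m.factorial : ℚ) := by
    rw [Fin.prod_univ_eq_prod_range (fun x => ((x:ℚ)+1)) m,
      ← Finset.prod_range_add_one_eq_factorial m]
    push_cast; rfl
  have h4 : (∏ r : Fin m, (1/((r:ℚ)+1))) = 1/(m.factorial : ℚ) := by
    rw [← h0]; simp [one_div, Finset.prod_inv_distrib]
  rw [h4]
  have hfac : (m.factorial : ℚ) ≠ 0 := by positivity
  rw [← mul_assoc, mul_one_div, div_self hfac, one_mul]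
  -- step 5/6 : relate the difference matrix to the (m+1)-Vandermonde
  set A' : Matrix (Fin (m+1)) (Fin (m+1)) ℚ := descM (m+1) (fun s => (a s : ℚ)) with hA'
  set B' : Matrix (Fin (m+1)) (Fin (m+1)) ℚ :=
    Matrix.of (fun s r => Fin.cases (A' 0 r) (fun t => A' t.succ r - A' t.castSucc r) s) with hB'
  have hdetAB : A'.det = B'.det := by
    apply Matrix.det_eq_of_forall_row_eq_smul_add_pred (c := fun _ => (1 : ℚ))
    · intro j; simp [hB']
    · intro i j; simp [hB']
  have hcol0 : ∀ s : Fin (m+1), B' s 0 = if s = 0 then 1 else 0 := by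
    intro s
    induction s using Fin.cases with
    | zero => simp [hB', hA', descM, descPochhammer]
    | succ t => simp [hB', hA', descM, descPochhammer, Fin.succ_ne_zero]
  have hexp : B'.det = (Matrix.of fun (s : Fin m) (r : Fin m) =>
        ((descPochhammer ℚ ((r : ℕ)+1)).eval ((a s.succ : ℚ))
          - (descPochhammer ℚ ((r : ℕ)+1)).eval ((a s.castSucc : ℚ)))).det := by
    rw [Matrix.det_succ_column_zero]
    rw [Finset.sum_eq_single 0]
    · rw [hcol0]
      simp only [if_pos rfl, Fin.val_zero, pow_zero, one_mul, Fin.succAbove_zero]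
      have hmat : B'.submatrix Fin.succ Fin.succ = Matrix.of (fun (t : Fin m) (r : Fin m) =>
          ((descPochhammer ℚ ((r : ℕ)+1)).eval ((a t.succ : ℚ))
            - (descPochhammer ℚ ((r : ℕ)+1)).eval ((a t.castSucc : ℚ)))) := by
        ext t r
        simp [hB', hA', descM, Matrix.submatrix_apply]
      rw [hmat]; simp
    · intro s _ hs
      rw [hcol0, if_neg hs]; ring
    · intro h; exact absurd (Finset.mem_univ _) h
  have final : (Matrix.of fun (s : Fin m) (r : Fin m) =>
        ((descPochhammer ℚ ((r : ℕ)+1)).eval ((a s.succ : ℚ))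
          - (descPochhammer ℚ ((r : ℕ)+1)).eval ((a s.castSucc : ℚ)))).det
      = (Matrix.vandermonde fun s : Fin (m+1) => ((a s : ℚ))).det := by
    rw [← hexp, ← hdetAB, hA', det_descM]
  exact final



lemma mem_youngCells {m : ℕ} {lam : ℕ → ℕ} {q : ℕ × ℕ} :
    q ∈ youngCells m lam ↔ q.1 < m ∧ q.2 < lam q.1 := by
  obtain ⟨r, c⟩ := q
  simp only [youngCells, Finset.mem_biUnion, Finset.mem_range, Finset.mem_image, Prod.mk.injEq]
  constructor
  · rintro ⟨r', hr', c', hc', rfl, rfl⟩; exact ⟨hr', hc'⟩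
  · rintro ⟨hr, hc⟩; exact ⟨r, hr, c, hc, rfl, rfl⟩

def cellMk {m : ℕ} {lam : ℕ → ℕ} (r c : ℕ) (h1 : r < m) (h2 : c < lam r) :
    {q // q ∈ youngCells m lam} := ⟨(r, c), mem_youngCells.mpr ⟨h1, h2⟩⟩

lemma row_mono {m : ℕ} {lam : ℕ → ℕ} {T : {q // q ∈ youngCells m lam} → Fin m}
    (hT : IsSSYT T) (r : ℕ) (h1 : r < m) :
    ∀ c' c, c ≤ c' → ∀ (h2 : c' < lam r) (h2' : c < lam r),
      T (cellMk r c h1 h2') ≤ T (cellMk r c' h1 h2) := by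
  intro c'
  induction c' with
  | zero => intro c hc h2 h2'; interval_cases c; exact le_refl _
  | succ c' ih =>
    intro c hc h2 h2'
    rcases Nat.lt_succ_iff_lt_or_eq.mp (Nat.lt_succ_of_le hc) with h | rfl
    · have h2'' : c' < lam r := Nat.lt_of_succ_lt h2
      refine le_trans (ih c (Nat.lt_succ_iff.mp h) h2'' h2') ?_
      exact hT.1 (cellMk r c' h1 h2'') (cellMk r (c'+1) h1 h2) rfl rfl
    · exact le_refl _

lemma col_ge {m : ℕ} {lam : ℕ → ℕ} {T : {q // q ∈ youngCells m lam} → Fin m}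
    (hlam : ∀ r, lam (r+1) ≤ lam r) (hT : IsSSYT T) :
    ∀ (r c : ℕ) (h1 : r < m) (h2 : c < lam r), r ≤ (T (cellMk r c h1 h2) : ℕ) := by
  intro r
  induction r with
  | zero => intro c h1 h2; exact Nat.zero_le _
  | succ r ih =>
    intro c h1 h2
    have h1' : r < m := Nat.lt_of_succ_lt h1
    have h2' : c < lam r := lt_of_lt_of_le h2 (hlam r)
    have hlt : T (cellMk r c h1' h2') < T (cellMk (r+1) c h1 h2) :=
      hT.2 (cellMk r c h1' h2') (cellMk (r+1) c h1 h2) rfl rfl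
    have := ih c h1' h2'
    have hv : (T (cellMk r c h1' h2') : ℕ) < (T (cellMk (r+1) c h1 h2) : ℕ) := hlt
    omega

lemma dc_finset (S : Finset ℕ) (h : ∀ a b : ℕ, a ≤ b → b ∈ S → a ∈ S) :
    ∀ x, x ∈ S ↔ x < S.card := by
  intro x
  constructor
  · intro hx
    have hsub : Finset.range (x+1) ⊆ S := fun a ha =>
      h a x (Nat.lt_succ_iff.mp (Finset.mem_range.mp ha)) hx
    have := Finset.card_le_card hsub
    simpa using this
  · intro hx
    by_contra hxS
    have hsub : S ⊆ Finset.range x := by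
      intro y hy
      rw [Finset.mem_range]
      by_contra hyx
      exact hxS (h x y (Nat.le_of_not_lt hyx) hy)
    have := Finset.card_le_card hsub
    simp only [Finset.card_range] at this
    omega

open Classical in
noncomputable def tval {m : ℕ} (lam : ℕ → ℕ) (T : {q // q ∈ youngCells m lam} → Fin m)
    (r c : ℕ) : ℕ :=
  if h : (r, c) ∈ youngCells m lam then (T ⟨(r,c), h⟩ : ℕ) else m

lemma tval_eq {m : ℕ} {lam : ℕ → ℕ} (T : {q // q ∈ youngCells m lam} → Fin m)
    {r c : ℕ} (h : (r, c) ∈ youngCells m lam) : tval lam T r c = (T ⟨(r,c), h⟩ : ℕ) :=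
  dif_pos h

open Classical in
noncomputable def muOf {m : ℕ} (lam : ℕ → ℕ) (T : {q // q ∈ youngCells (m+1) lam} → Fin (m+1))
    (s : ℕ) : ℕ :=
  ((Finset.range (lam s)).filter (fun c => tval lam T s c < m)).card

open Classical in
lemma mem_muOf_iff {m : ℕ} {lam : ℕ → ℕ} {T : {q // q ∈ youngCells (m+1) lam} → Fin (m+1)}
    (hT : IsSSYT T) (s : ℕ) (c : ℕ) :
    (c < lam s ∧ tval lam T s c < m) ↔ c < muOf lam T s := by
  have hdc : ∀ a b : ℕ, a ≤ b →
      b ∈ (Finset.range (lam s)).filter (fun c => tval lam T s c < m) →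
      a ∈ (Finset.range (lam s)).filter (fun c => tval lam T s c < m) := by
    intro a b hab hb
    rw [Finset.mem_filter, Finset.mem_range] at hb ⊢
    obtain ⟨hb1, hb2⟩ := hb
    have ha1 : a < lam s := lt_of_le_of_lt hab hb1
    have hsm : s < m + 1 := by
      by_contra hs
      have : ¬ ((s, b) ∈ youngCells (m+1) lam) := by
        rw [mem_youngCells]; push_neg; intro h; omega
      rw [tval, dif_neg this] at hb2; omega
    have hcellb : (s, b) ∈ youngCells (m+1) lam := mem_youngCells.mpr ⟨hsm, hb1⟩
    have hcella : (s, a) ∈ youngCells (m+1) lam := mem_youngCells.mpr ⟨hsm, ha1⟩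
    refine ⟨ha1, ?_⟩
    rw [tval_eq T hcellb] at hb2
    rw [tval_eq T hcella]
    have := row_mono hT s hsm b a hab hb1 ha1
    have : (T (cellMk s a hsm ha1) : ℕ) ≤ (T (cellMk s b hsm hb1) : ℕ) := this
    calc (T ⟨(s,a), hcella⟩ : ℕ) ≤ (T ⟨(s,b), hcellb⟩ : ℕ) := this
      _ < m := hb2
  have := dc_finset _ hdc c
  unfold muOf
  rw [← this, Finset.mem_filter, Finset.mem_range]

lemma muOf_le {m : ℕ} {lam : ℕ → ℕ} (T : {q // q ∈ youngCells (m+1) lam} → Fin (m+1))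
    (s : ℕ) : muOf lam T s ≤ lam s := by
  classical
  calc muOf lam T s ≤ (Finset.range (lam s)).card := Finset.card_le_card (Finset.filter_subset _ _)
    _ = lam s := Finset.card_range _

lemma le_muOf {m : ℕ} {lam : ℕ → ℕ} {T : {q // q ∈ youngCells (m+1) lam} → Fin (m+1)}
    (hlam : ∀ r, lam (r+1) ≤ lam r) (hT : IsSSYT T) {s : ℕ} (hs : s < m) :
    lam (s+1) ≤ muOf lam T s := by
  classical
  rcases Nat.eq_zero_or_pos (lam (s+1)) with h0 | hpos
  · omega
  have : lam (s+1) - 1 < muOf lam T s := by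
    rw [← mem_muOf_iff hT]
    have hc1 : lam (s+1) - 1 < lam (s+1) := by omega
    have hc2 : lam (s+1) - 1 < lam s := lt_of_lt_of_le hc1 (hlam s)
    have hs1 : s + 1 < m + 1 := by omega
    have hs0 : s < m + 1 := by omega
    refine ⟨hc2, ?_⟩
    rw [tval_eq T (mem_youngCells.mpr ⟨hs0, hc2⟩ : ((s, lam (s+1) - 1) ∈ _))]
    have hlt : T (cellMk s (lam (s+1)-1) hs0 hc2) < T (cellMk (s+1) (lam (s+1)-1) hs1 hc1) :=
      hT.2 _ _ rfl rfl
    have h1 : (T (cellMk s (lam (s+1)-1) hs0 hc2) : ℕ)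
        < (T (cellMk (s+1) (lam (s+1)-1) hs1 hc1) : ℕ) := hlt
    have h2 : (T (cellMk (s+1) (lam (s+1)-1) hs1 hc1) : ℕ) < m + 1 := Fin.is_lt _
    have : (T (cellMk s (lam (s+1)-1) hs0 hc2) : ℕ) < m := by omega
    exact this
  omega

end SSYTAux

/-- extend a `Fin m`-indexed choice to `ℕ → ℕ`. -/
def toMu (m : ℕ) (f : Fin m → ℕ) : ℕ → ℕ := fun r => if h : r < m then f ⟨r, h⟩ else 0

namespace SSYTAux

lemma mem_toMu_young {m : ℕ} {f : Fin m → ℕ} {r c : ℕ} :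
    (r, c) ∈ youngCells m (toMu m f) ↔ ∃ h : r < m, c < f ⟨r, h⟩ := by
  rw [mem_youngCells]
  constructor
  · rintro ⟨h1, h2⟩
    rw [toMu, dif_pos h1] at h2
    exact ⟨h1, h2⟩
  · rintro ⟨h1, h2⟩
    exact ⟨h1, by rw [toMu, dif_pos h1]; exact h2⟩

open Classical in
noncomputable def fwd (m : ℕ) (lam : ℕ → ℕ)
    (T : {q // q ∈ youngCells (m+1) lam} → Fin (m+1)) (hT : IsSSYT T) :
    Σ f : Fin m → ℕ, ({q // q ∈ youngCells m (toMu m f)} → Fin m) :=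
  ⟨fun s => muOf lam T (s : ℕ),
   fun q => ⟨tval lam T q.1.1 q.1.2, by
      have hq := q.2
      have hq' : (q.1.1, q.1.2) ∈ youngCells m (toMu m (fun s => muOf lam T (s : ℕ))) := by
        rwa [show ((q.1.1, q.1.2) : ℕ × ℕ) = q.1 from rfl]
      obtain ⟨h1, h2⟩ := mem_toMu_young.mp hq'
      exact ((mem_muOf_iff hT q.1.1 q.1.2).mpr h2).2⟩⟩

open Classical in
noncomputable def bwd (m : ℕ) (lam : ℕ → ℕ)
    (b : Σ f : Fin m → ℕ, ({q // q ∈ youngCells m (toMu m f)} → Fin m)) :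
    {q // q ∈ youngCells (m+1) lam} → Fin (m+1) :=
  fun q => if h : q.1 ∈ youngCells m (toMu m b.1) then (b.2 ⟨q.1, h⟩).castSucc else Fin.last m

open Classical in
lemma fwd_mem {m : ℕ} {lam : ℕ → ℕ} (hlam : ∀ r, lam (r+1) ≤ lam r)
    {T : {q // q ∈ youngCells (m+1) lam} → Fin (m+1)} (hT : IsSSYT T) :
    fwd m lam T hT ∈ (Fintype.piFinset
        (fun s : Fin m => Finset.Icc (lam ((s:ℕ)+1)) (lam (s:ℕ)))).sigma
      (fun f => ssytFinset m (toMu m f)) := by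
  rw [Finset.mem_sigma]
  constructor
  · rw [Fintype.mem_piFinset]
    intro s
    rw [Finset.mem_Icc]
    exact ⟨le_muOf hlam hT s.isLt, muOf_le T s⟩
  · rw [ssytFinset, Finset.mem_filter]
    refine ⟨Finset.mem_univ _, ?_, ?_⟩
    · -- rows
      rintro ⟨⟨r, c⟩, hp⟩ ⟨⟨r', c'⟩, hq⟩ h1 h2
      simp only at h1 h2
      subst h1; subst h2
      obtain ⟨hr, hc⟩ := mem_toMu_young.mp hp
      obtain ⟨hr', hc'⟩ := mem_toMu_young.mp hq
      have hcm : c < muOf lam T r := hc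
      have hcm' : c + 1 < muOf lam T r := hc'
      have h3 := (mem_muOf_iff hT r c).mpr hcm
      have h3' := (mem_muOf_iff hT r (c+1)).mpr hcm'
      have hrm : r < m + 1 := Nat.lt_succ_of_lt hr
      have hcell : ((r, c) : ℕ × ℕ) ∈ youngCells (m+1) lam := mem_youngCells.mpr ⟨hrm, h3.1⟩
      have hcell' : ((r, c+1) : ℕ × ℕ) ∈ youngCells (m+1) lam := mem_youngCells.mpr ⟨hrm, h3'.1⟩
      show (⟨tval lam T r c, _⟩ : Fin m) ≤ ⟨tval lam T r (c+1), _⟩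
      rw [Fin.mk_le_mk, tval_eq T hcell, tval_eq T hcell']
      exact hT.1 ⟨(r, c), hcell⟩ ⟨(r, c+1), hcell'⟩ rfl rfl
    · -- cols
      rintro ⟨⟨r, c⟩, hp⟩ ⟨⟨r', c'⟩, hq⟩ h1 h2
      simp only at h1 h2
      subst h1; subst h2
      obtain ⟨hr, hc⟩ := mem_toMu_young.mp hp
      obtain ⟨hr', hc'⟩ := mem_toMu_young.mp hq
      have h3 := (mem_muOf_iff hT r c).mpr hc
      have h3' := (mem_muOf_iff hT (r+1) c).mpr hc'
      have hrm : r < m + 1 := Nat.lt_succ_of_lt hr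
      have hrm' : r + 1 < m + 1 := Nat.succ_lt_succ hr
      have hcell : ((r, c) : ℕ × ℕ) ∈ youngCells (m+1) lam := mem_youngCells.mpr ⟨hrm, h3.1⟩
      have hcell' : ((r+1, c) : ℕ × ℕ) ∈ youngCells (m+1) lam := mem_youngCells.mpr ⟨hrm', h3'.1⟩
      show (⟨tval lam T r c, _⟩ : Fin m) < ⟨tval lam T (r+1) c, _⟩
      rw [Fin.mk_lt_mk, tval_eq T hcell, tval_eq T hcell']
      exact hT.2 ⟨(r, c), hcell⟩ ⟨(r+1, c), hcell'⟩ rfl rfl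

open Classical in
lemma bwd_mem {m : ℕ} {lam : ℕ → ℕ} (hlam : ∀ r, lam (r+1) ≤ lam r)
    {b : Σ f : Fin m → ℕ, ({q // q ∈ youngCells m (toMu m f)} → Fin m)}
    (hb : b ∈ (Fintype.piFinset
        (fun s : Fin m => Finset.Icc (lam ((s:ℕ)+1)) (lam (s:ℕ)))).sigma
      (fun f => ssytFinset m (toMu m f))) :
    bwd m lam b ∈ ssytFinset (m+1) lam := by
  rw [Finset.mem_sigma, Fintype.mem_piFinset] at hb
  obtain ⟨hf, hS⟩ := hb
  rw [ssytFinset, Finset.mem_filter] at hS ⊢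
  have hS' := hS.2
  refine ⟨Finset.mem_univ _, ?_, ?_⟩
  · -- rows
    rintro ⟨⟨r, c⟩, hp⟩ ⟨⟨r', c'⟩, hq⟩ h1 h2
    simp only at h1 h2
    subst h1; subst h2
    show bwd m lam b ⟨(r, c), hp⟩ ≤ bwd m lam b ⟨(r, c+1), hq⟩
    simp only [bwd]
    by_cases hq' : ((r, c+1) : ℕ × ℕ) ∈ youngCells m (toMu m b.1)
    · obtain ⟨hr1, hc1⟩ := mem_toMu_young.mp hq'
      have hp' : ((r, c) : ℕ × ℕ) ∈ youngCells m (toMu m b.1) :=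
        mem_toMu_young.mpr ⟨hr1, Nat.lt_of_succ_lt hc1⟩
      rw [dif_pos hp', dif_pos hq']
      rw [Fin.castSucc_le_castSucc_iff]
      exact hS'.1 ⟨(r, c), hp'⟩ ⟨(r, c+1), hq'⟩ rfl rfl
    · rw [dif_neg hq']
      exact Fin.le_last _
  · -- cols
    rintro ⟨⟨r, c⟩, hp⟩ ⟨⟨r', c'⟩, hq⟩ h1 h2
    simp only at h1 h2
    subst h1; subst h2
    obtain ⟨hrm, hcl⟩ := mem_youngCells.mp hp
    obtain ⟨hrm', hcl'⟩ := mem_youngCells.mp hq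
    simp only at hrm hcl hrm' hcl'
    have hr : r < m := by omega
    have hp' : ((r, c) : ℕ × ℕ) ∈ youngCells m (toMu m b.1) := by
      refine mem_toMu_young.mpr ⟨hr, ?_⟩
      have := (Finset.mem_Icc.mp (hf ⟨r, hr⟩)).1
      exact lt_of_lt_of_le hcl' this
    show bwd m lam b ⟨(r, c), hp⟩ < bwd m lam b ⟨(r+1, c), hq⟩
    simp only [bwd]
    rw [dif_pos hp']
    by_cases hq' : ((r+1, c) : ℕ × ℕ) ∈ youngCells m (toMu m b.1)
    · rw [dif_pos hq']
      rw [Fin.castSucc_lt_castSucc_iff]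
      exact hS'.2 ⟨(r, c), hp'⟩ ⟨(r+1, c), hq'⟩ rfl rfl
    · rw [dif_neg hq']
      exact Fin.castSucc_lt_last _

open Classical in
lemma left_inv {m : ℕ} {lam : ℕ → ℕ} (hlam : ∀ r, lam (r+1) ≤ lam r)
    {T : {q // q ∈ youngCells (m+1) lam} → Fin (m+1)} (hT : IsSSYT T) :
    bwd m lam (fwd m lam T hT) = T := by
  funext q
  obtain ⟨⟨r, c⟩, hq⟩ := q
  obtain ⟨hrm, hcl⟩ := mem_youngCells.mp hq
  simp only at hrm hcl
  simp only [bwd, fwd]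
  by_cases h : ((r, c) : ℕ × ℕ) ∈ youngCells m (toMu m (fun s : Fin m => muOf lam T (s : ℕ)))
  · simp only [h, ↓reduceDIte]
    apply Fin.ext
    simp only [Fin.coe_castSucc]
    exact tval_eq T hq
  · simp only [h, ↓reduceDIte]
    apply Fin.ext
    simp only [Fin.val_last]
    by_cases hr : r < m
    · have hnc : ¬ c < muOf lam T r := by
        intro hc
        exact h (mem_toMu_young.mpr ⟨hr, hc⟩)
      rw [← mem_muOf_iff hT] at hnc
      push_neg at hnc
      have h5 := hnc hcl
      have h6 : (T ⟨(r, c), hq⟩ : ℕ) < m + 1 := Fin.is_lt _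
      rw [tval_eq T hq] at h5
      omega
    · have hrm2 : r = m := by omega
      have := col_ge hlam hT r c hrm hcl
      have h6 : (T (cellMk r c hrm hcl) : ℕ) < m + 1 := Fin.is_lt _
      have h7 : (T (cellMk r c hrm hcl) : ℕ) = m := by omega
      exact h7.symm ▸ h7

lemma sigma_eq_helper {m : ℕ} (f g : Fin m → ℕ) (h : f = g)
    (S : {q // q ∈ youngCells m (toMu m f)} → Fin m)
    (S' : {q // q ∈ youngCells m (toMu m g)} → Fin m)
    (hval : ∀ (r c : ℕ) (h1 : (r, c) ∈ youngCells m (toMu m f))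
      (h2 : (r, c) ∈ youngCells m (toMu m g)), S ⟨(r, c), h1⟩ = S' ⟨(r, c), h2⟩) :
    (⟨f, S⟩ : Σ f : Fin m → ℕ, ({q // q ∈ youngCells m (toMu m f)} → Fin m)) = ⟨g, S'⟩ := by
  subst h
  have : S = S' := by
    funext q
    obtain ⟨⟨r, c⟩, hq⟩ := q
    exact hval r c hq hq
  rw [this]

open Classical in
lemma right_inv {m : ℕ} {lam : ℕ → ℕ} (hlam : ∀ r, lam (r+1) ≤ lam r)
    (b : Σ f : Fin m → ℕ, ({q // q ∈ youngCells m (toMu m f)} → Fin m))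
    (hb : b ∈ (Fintype.piFinset
        (fun s : Fin m => Finset.Icc (lam ((s:ℕ)+1)) (lam (s:ℕ)))).sigma
      (fun f => ssytFinset m (toMu m f)))
    (hT : IsSSYT (bwd m lam b)) :
    fwd m lam (bwd m lam b) hT = b := by
  rw [Finset.mem_sigma, Fintype.mem_piFinset] at hb
  obtain ⟨f, S⟩ := b
  obtain ⟨hf, hS⟩ := hb
  have h1 : (fun s : Fin m => muOf lam (bwd m lam ⟨f, S⟩) (s : ℕ)) = f := by
    funext s
    have hfs := Finset.mem_Icc.mp (hf s)
    have hset : (Finset.range (lam (s:ℕ))).filter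
        (fun c => tval lam (bwd m lam ⟨f, S⟩) (s:ℕ) c < m) = Finset.range (f s) := by
      apply Finset.ext
      intro c
      rw [Finset.mem_filter, Finset.mem_range, Finset.mem_range]
      have hsm : (s : ℕ) < m + 1 := Nat.lt_succ_of_lt s.isLt
      constructor
      · rintro ⟨hc1, hc2⟩
        have hcell : (((s:ℕ), c) : ℕ × ℕ) ∈ youngCells (m+1) lam := mem_youngCells.mpr ⟨hsm, hc1⟩
        rw [tval_eq _ hcell] at hc2
        simp only [bwd] at hc2
        by_cases hmu : (((s:ℕ), c) : ℕ × ℕ) ∈ youngCells m (toMu m f)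
        · obtain ⟨hr', hc'⟩ := mem_toMu_young.mp hmu
          simpa [Fin.eta] using hc'
        · rw [dif_neg hmu] at hc2
          simp at hc2
      · intro hc
        have hc1 : c < lam (s : ℕ) := lt_of_lt_of_le hc hfs.2
        have hcell : (((s:ℕ), c) : ℕ × ℕ) ∈ youngCells (m+1) lam := mem_youngCells.mpr ⟨hsm, hc1⟩
        have hmu : (((s:ℕ), c) : ℕ × ℕ) ∈ youngCells m (toMu m f) :=
          mem_toMu_young.mpr ⟨s.isLt, by simpa [Fin.eta] using hc⟩
        refine ⟨hc1, ?_⟩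
        rw [tval_eq _ hcell]
        simp only [bwd]
        rw [dif_pos hmu]
        exact (S ⟨((s:ℕ), c), hmu⟩).isLt
    rw [muOf, hset, Finset.card_range]
  -- now the sigma equality
  refine sigma_eq_helper _ f h1 _ S ?_
  intro r c hc1 hc2
  apply Fin.ext
  show tval lam (bwd m lam ⟨f, S⟩) r c = ((S ⟨(r, c), hc2⟩ : Fin m) : ℕ)
  obtain ⟨hr', hcf⟩ := mem_toMu_young.mp hc2
  have hc1' : c < lam r := lt_of_lt_of_le hcf (Finset.mem_Icc.mp (hf ⟨r, hr'⟩)).2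
  have hcell : ((r, c) : ℕ × ℕ) ∈ youngCells (m+1) lam :=
    mem_youngCells.mpr ⟨Nat.lt_succ_of_lt hr', hc1'⟩
  rw [tval_eq _ hcell]
  simp only [bwd]
  rw [dif_pos hc2]
  rfl

open Classical in
lemma branching (m : ℕ) (lam : ℕ → ℕ) (hlam : ∀ r, lam (r+1) ≤ lam r) :
    (ssytFinset (m+1) lam).card
      = ∑ f ∈ Fintype.piFinset (fun s : Fin m => Finset.Icc (lam ((s:ℕ)+1)) (lam (s:ℕ))),
          (ssytFinset m (toMu m f)).card := by
  classical
  rw [← Finset.card_sigma]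
  refine Finset.card_bij'
    (fun T hT => fwd m lam T ((Finset.mem_filter.mp hT).2))
    (fun b hb => bwd m lam b)
    (fun T hT => fwd_mem hlam _)
    (fun b hb => (Finset.mem_filter.mpr ⟨Finset.mem_univ _, (Finset.mem_filter.mp (bwd_mem hlam hb)).2⟩))
    (fun T hT => left_inv hlam _)
    (fun b hb => right_inv hlam b hb _)

lemma ssyt_zero (lam : ℕ → ℕ) : (ssytFinset 0 lam).card = 1 := by
  classical
  have he : youngCells 0 lam = ∅ := by
    rw [youngCells]; simp
  have : ∀ T : {p // p ∈ youngCells 0 lam} → Fin 0, IsSSYT T := by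
    intro T
    constructor <;> · rintro ⟨q, hq⟩; simp [he] at hq
  rw [ssytFinset]
  rw [Finset.filter_true_of_mem (fun T _ => this T)]
  rw [Finset.card_univ]
  haveI : IsEmpty {p // p ∈ youngCells 0 lam} :=
    ⟨fun x => Finset.notMem_empty x.1 (he ▸ x.2)⟩
  exact Fintype.card_unique

open Classical in
lemma count_formula : ∀ (m : ℕ) (lam : ℕ → ℕ), (∀ r, lam (r+1) ≤ lam r) →
    ((ssytFinset m lam).card : ℚ) * (∏ r ∈ Finset.range m, (r.factorial : ℚ))
      = (Matrix.vandermonde (fun t : Fin m =>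
          ((lam (m - 1 - (t:ℕ)) + (t:ℕ) : ℕ) : ℚ))).det := by
  intro m
  induction m with
  | zero =>
    intro lam hlam
    rw [ssyt_zero]
    simp [Matrix.det_fin_zero]
  | succ m ih =>
    intro lam hlam
    rw [branching m lam hlam]
    push_cast
    rw [Finset.sum_mul]
    rw [Finset.prod_range_succ]
    -- bring in the IH for each f
    have hstep : ∀ f ∈ Fintype.piFinset
        (fun s : Fin m => Finset.Icc (lam ((s:ℕ)+1)) (lam (s:ℕ))),
        ((ssytFinset m (toMu m f)).card : ℚ) * ((∏ r ∈ Finset.range m, (r.factorial : ℚ)) * (m.factorial : ℚ))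
          = (m.factorial : ℚ) * (Matrix.vandermonde (fun t : Fin m =>
              ((toMu m f (m - 1 - (t:ℕ)) + (t:ℕ) : ℕ) : ℚ))).det := by
      intro f hf
      have hmu : ∀ r, toMu m f (r+1) ≤ toMu m f r := by
        intro r
        rw [toMu]
        rcases Nat.lt_or_ge (r+1) m with h | h
        · rw [dif_pos h, toMu, dif_pos (by omega : r < m)]
          have h1 := (Finset.mem_Icc.mp ((Fintype.mem_piFinset.mp hf) ⟨r+1, h⟩)).2
          have h2 := (Finset.mem_Icc.mp ((Fintype.mem_piFinset.mp hf) ⟨r, by omega⟩)).1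
          calc f ⟨r+1, h⟩ ≤ lam (r+1) := h1
            _ ≤ f ⟨r, by omega⟩ := h2
        · rw [dif_neg (by omega)]
          exact Nat.zero_le _
      have := ih (toMu m f) hmu
      rw [← mul_assoc, this]
      ring
    rw [Finset.sum_congr rfl hstep, ← Finset.mul_sum]
    -- reindex the sum
    have hreindex : ∑ f ∈ Fintype.piFinset
        (fun s : Fin m => Finset.Icc (lam ((s:ℕ)+1)) (lam (s:ℕ))),
        (Matrix.vandermonde (fun t : Fin m =>
            ((toMu m f (m - 1 - (t:ℕ)) + (t:ℕ) : ℕ) : ℚ))).det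
      = ∑ d ∈ Fintype.piFinset (fun t : Fin m =>
            Finset.Ico ((fun t : Fin (m+1) => lam (m - (t:ℕ)) + (t:ℕ)) t.castSucc)
              ((fun t : Fin (m+1) => lam (m - (t:ℕ)) + (t:ℕ)) t.succ)),
        (Matrix.vandermonde (fun t : Fin m => ((d t : ℕ) : ℚ))).det := by
      refine Finset.sum_nbij'
        (fun f : Fin m → ℕ => fun t : Fin m => f ⟨m - 1 - (t:ℕ), by have := t.isLt; omega⟩ + (t:ℕ))
        (fun d : Fin m → ℕ => fun s : Fin m => d ⟨m - 1 - (s:ℕ), by have := s.isLt; omega⟩ - (m - 1 - (s:ℕ)))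
        ?_ ?_ ?_ ?_ ?_
      · intro f hf
        rw [Fintype.mem_piFinset] at hf ⊢
        intro t
        have ht := t.isLt
        have h1 : lam ((m - 1 - (t:ℕ)) + 1) ≤ f ⟨m - 1 - (t:ℕ), by omega⟩ ∧
            f ⟨m - 1 - (t:ℕ), by omega⟩ ≤ lam (m - 1 - (t:ℕ)) :=
          Finset.mem_Icc.mp (hf ⟨m - 1 - (t:ℕ), by omega⟩)
        simp only [Finset.mem_Ico, Fin.coe_castSucc, Fin.val_succ]
        have e1 : (m - 1 - (t:ℕ)) + 1 = m - (t:ℕ) := by omega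
        rw [e1] at h1
        have e3 : m - ((t:ℕ)+1) = m - 1 - (t:ℕ) := by omega
        rw [e3]
        omega
      · intro d hd
        rw [Fintype.mem_piFinset] at hd ⊢
        intro s
        have hs := s.isLt
        have h1 : lam (m - ((m - 1 - (s:ℕ)))) + (m - 1 - (s:ℕ)) ≤ d ⟨m - 1 - (s:ℕ), by omega⟩ ∧
            d ⟨m - 1 - (s:ℕ), by omega⟩ < lam (m - ((m - 1 - (s:ℕ)) + 1)) + ((m - 1 - (s:ℕ)) + 1) :=
          Finset.mem_Ico.mp (hd ⟨m - 1 - (s:ℕ), by omega⟩)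
        simp only [Finset.mem_Icc]
        have e1 : m - (m - 1 - (s:ℕ)) = (s:ℕ) + 1 := by omega
        have e2 : m - ((m - 1 - (s:ℕ)) + 1) = (s:ℕ) := by omega
        rw [e1, e2] at h1
        omega
      · intro f hf
        funext s
        have hs := s.isLt
        have e1 : (⟨m - 1 - (m - 1 - (s:ℕ)), by omega⟩ : Fin m) = s :=
          Fin.ext (show m - 1 - (m - 1 - (s:ℕ)) = (s:ℕ) by omega)
        simp only []
        rw [e1]
        omega
      · intro d hd
        rw [Fintype.mem_piFinset] at hd
        funext t
        have ht := t.isLt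
        have e1 : (⟨m - 1 - (m - 1 - (t:ℕ)), by omega⟩ : Fin m) = t :=
          Fin.ext (show m - 1 - (m - 1 - (t:ℕ)) = (t:ℕ) by omega)
        simp only []
        rw [e1]
        have h1 := Finset.mem_Ico.mp (hd t)
        simp only [Fin.coe_castSucc, Fin.val_succ] at h1
        omega
      · intro f hf
        apply congrArg Matrix.det
        apply congrArg Matrix.vandermonde
        funext t
        have ht := t.isLt
        rw [toMu, dif_pos (by omega : m - 1 - (t:ℕ) < m)]
    rw [hreindex]
    have hsv := sum_vand m (fun t : Fin (m+1) => lam (m - (t:ℕ)) + (t:ℕ)) (by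
      intro s
      simp only [Fin.coe_castSucc, Fin.val_succ]
      have hs : (s:ℕ) < m := s.isLt
      have h1 : m - (s:ℕ) = (m - ((s:ℕ)+1)) + 1 := by omega
      rw [h1]
      have := hlam (m - ((s:ℕ)+1))
      omega)
    rw [hsv]
    apply congrArg Matrix.det
    apply congrArg Matrix.vandermonde
    funext t
    push_cast
    ring

end SSYTAux

/-- For `p` prime, `1 ≤ i ≤ k ≤ p−1` and `1 ≤ j ≤ p−k`, the number of semistandard
Young tableaux of rectangular shape `(i^j)` (j rows, i columns) with entries in
`{1,…,p−k}` is not divisible by `p`. -/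
theorem card_rect_ssyt_not_dvd_prime
    (p k i j : ℕ) (hp : Nat.Prime p) (hi1 : 1 ≤ i) (hik : i ≤ k) (hk : k ≤ p - 1)
    (hj1 : 1 ≤ j) (hj : j ≤ p - k) :
    ¬ (p ∣ (ssytFinset (p - k) (rectPart j i)).card) := by
  classical
  set m := p - k with hm
  have hp2 : 2 ≤ p := hp.two_le
  have hm1 : 1 ≤ m := by omega
  have him : i + m ≤ p := by omega
  set lam := rectPart j i with hlamdef
  have hlam : ∀ r, lam (r+1) ≤ lam r := by
    intro r
    simp only [hlamdef, rectPart]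
    split_ifs <;> omega
  have hlam_le : ∀ r, lam r ≤ i := by
    intro r
    simp only [hlamdef, rectPart]
    split_ifs <;> omega
  have hform := SSYTAux.count_formula m lam hlam
  set N := (ssytFinset m lam).card with hN
  set a : Fin m → ℕ := fun t => lam (m - 1 - (t:ℕ)) + (t:ℕ) with ha
  have hamono : ∀ x y : Fin m, x < y → a x < a y := by
    intro x y hxy
    have hxy' : (x:ℕ) < (y:ℕ) := hxy
    have h1 : lam (m - 1 - (x:ℕ)) ≤ lam (m - 1 - (y:ℕ)) := by
      simp only [hlamdef, rectPart]
      split_ifs with h1 h2 <;> omega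
    simp only [ha]
    omega
  have habove : ∀ t : Fin m, a t ≤ i + m - 1 := by
    intro t
    have := hlam_le (m - 1 - (t:ℕ))
    have ht := t.isLt
    simp only [ha]
    omega
  rw [Matrix.det_vandermonde] at hform
  set P : ℕ := ∏ x : Fin m, ∏ y ∈ Finset.Ioi x, (a y - a x) with hP
  have hcast : ((N * ∏ r ∈ Finset.range m, r.factorial : ℕ) : ℚ) = ((P : ℕ) : ℚ) := by
    push_cast
    rw [hform, hP]
    push_cast
    refine Finset.prod_congr rfl fun x _ => Finset.prod_congr rfl fun y hy => ?_
    have hxy : x < y := Finset.mem_Ioi.mp hy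
    have hle : a x ≤ a y := le_of_lt (hamono x y hxy)
    rw [Nat.cast_sub hle]
    simp [ha]
  have hNP : N * (∏ r ∈ Finset.range m, r.factorial) = P := by
    exact_mod_cast hcast
  have hPnd : ¬ p ∣ P := by
    have hcop : Nat.Coprime p P := by
      rw [hP]
      apply Nat.Coprime.prod_right
      intro x _
      apply Nat.Coprime.prod_right
      intro y hy
      rw [Nat.Prime.coprime_iff_not_dvd hp]
      intro hdvd
      have h1 : 0 < a y - a x := by
        have := hamono x y (Finset.mem_Ioi.mp hy)
        omega
      have h2 := Nat.le_of_dvd h1 hdvd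
      have h3 := habove y
      omega
    intro hdvd
    have h4 : p ∣ Nat.gcd p P := Nat.dvd_gcd dvd_rfl hdvd
    rw [hcop] at h4
    have := Nat.le_of_dvd one_pos h4
    omega
  intro hdvd
  exact hPnd (hNP ▸ Dvd.dvd.mul_right hdvd _)


end
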